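/- Let H be a finite-dimensional Hopf algebra and L a left H-comodule algebra. Then L ⊗ k with the structure maps from the α-induction functor Ψ is well-defined: for a Yetter–Drinfeld module (X, ·, δ), the space X ⊗ L with actions s ≻ (x ⊗ l) ≺ t := s₋₁·x ⊗ s₀ l t and coaction ρ(x ⊗ l) := x₋₁ l₋₁ ⊗ x₀ ⊗ l₀ is an object of the category of H-comodule L-bimodules (i.e., an L-bimodule in H-comodules). -/

import Mathlib

open TensorProduct

section

variable (k : Type*) [Field k] (H : Type*) [Ring H] [HopfAlgebra k H]
variable (X : Type*) [AddCommGroup X] [Module k X]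
variable (L : Type*) [Ring L] [Algebra k L]

/-- Point-free comodule axioms for a coaction `δ : X →ₗ H ⊗ X`. -/
def IsComodule (δ : X →ₗ[k] H ⊗[k] X) : Prop :=
  ((TensorProduct.assoc k H H X).toLinearMap ∘ₗ
      (LinearMap.rTensor X (Coalgebra.comul (R := k))) ∘ₗ δ =
    (LinearMap.lTensor H δ) ∘ₗ δ) ∧
  ((TensorProduct.lid k X).toLinearMap ∘ₗ
      (LinearMap.rTensor X (Coalgebra.counit (R := k))) ∘ₗ δ = LinearMap.id)

/-- Module axioms for an action `a : H ⊗ X →ₗ X`. -/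
def IsModuleAction (a : H ⊗[k] X →ₗ[k] X) : Prop :=
  (∀ x : X, a ((1 : H) ⊗ₜ[k] x) = x) ∧
  (∀ (g h : H) (x : X), a ((g * h) ⊗ₜ[k] x) = a (g ⊗ₜ[k] a (h ⊗ₜ[k] x)))

/-- The right-hand side `h₁ x₋₁ S(h₃) ⊗ h₂ · x₀` of the Yetter–Drinfeld condition,
as a linear endomorphism of `H ⊗ X`. -/
noncomputable def ydRHS (a : H ⊗[k] X →ₗ[k] X) (δ : X →ₗ[k] H ⊗[k] X) :
    H ⊗[k] X →ₗ[k] H ⊗[k] X :=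
  (LinearMap.rTensor X (LinearMap.mul' k H)) ∘ₗ
  (TensorProduct.assoc k H H X).symm.toLinearMap ∘ₗ
  (LinearMap.rTensor (H ⊗[k] X) (LinearMap.mul' k H)) ∘ₗ
  (LinearMap.lTensor (H ⊗[k] H)
    ((TensorProduct.map (HopfAlgebra.antipode k : H →ₗ[k] H) a) ∘ₗ
     (TensorProduct.assoc k H H X).toLinearMap ∘ₗ
     (LinearMap.rTensor X (TensorProduct.comm k H H).toLinearMap))) ∘ₗ
  (TensorProduct.tensorTensorTensorComm k H (H ⊗[k] H) H X).toLinearMap ∘ₗ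
  (TensorProduct.map
    ((LinearMap.lTensor H (Coalgebra.comul (R := k))) ∘ₗ (Coalgebra.comul (R := k))) δ)

/-- `(a, δ)` is a Yetter–Drinfeld module structure on `X`. -/
noncomputable def IsYetterDrinfeld (a : H ⊗[k] X →ₗ[k] X) (δ : X →ₗ[k] H ⊗[k] X) : Prop :=
  IsModuleAction k H X a ∧ IsComodule k H X δ ∧ δ ∘ₗ a = ydRHS k H X a δ

/-- `δL` makes the `k`-algebra `L` a left `H`-comodule algebra. -/
def IsComoduleAlgebra (δL : L →ₗ[k] H ⊗[k] L) : Prop :=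
  IsComodule k H L δL ∧ (δL 1 = 1) ∧ (∀ a b : L, δL (a * b) = δL a * δL b)

variable (a : H ⊗[k] X →ₗ[k] X) (δX : X →ₗ[k] H ⊗[k] X) (δL : L →ₗ[k] H ⊗[k] L)

/-- The left `L`-action `l ≻ (x ⊗ m) = l₋₁ · x ⊗ l₀ m` on `X ⊗ L`. -/
noncomputable def lactL : L →ₗ[k] (X ⊗[k] L) →ₗ[k] (X ⊗[k] L) :=
  (TensorProduct.homTensorHomMap (RingHom.id k) X L X L) ∘ₗ
    (TensorProduct.map (TensorProduct.curry a) (LinearMap.mul k L)) ∘ₗ δL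

/-- The right `L`-action `(x ⊗ m) ≺ t = x ⊗ m t` on `X ⊗ L`. -/
noncomputable def ractL : L →ₗ[k] (X ⊗[k] L) →ₗ[k] (X ⊗[k] L) :=
  (LinearMap.lTensorHom X) ∘ₗ (LinearMap.mul k L).flip

/-- The `H`-coaction `ρ(x ⊗ l) = x₋₁ l₋₁ ⊗ (x₀ ⊗ l₀)` on `X ⊗ L`. -/
noncomputable def coactP : (X ⊗[k] L) →ₗ[k] H ⊗[k] (X ⊗[k] L) :=
  (TensorProduct.map (LinearMap.mul' k H) LinearMap.id) ∘ₗ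
    (TensorProduct.tensorTensorTensorComm k H X H L).toLinearMap ∘ₗ
    (TensorProduct.map δX δL)

/-- `π ⊗ q ↦ a₋₁ π ⊗ a₀ ≻ q` on `H ⊗ (X ⊗ L)`. -/
noncomputable def AA (l : L) : (H ⊗[k] (X ⊗[k] L)) →ₗ[k] (H ⊗[k] (X ⊗[k] L)) :=
  (TensorProduct.homTensorHomMap (RingHom.id k) H (X ⊗[k] L) H (X ⊗[k] L))
    ((TensorProduct.map (LinearMap.mul k H) (lactL k H X L a δL)) (δL l))

/-- `π ⊗ q ↦ π b₋₁ ⊗ q ≺ b₀` on `H ⊗ (X ⊗ L)`. -/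
noncomputable def BB (l : L) : (H ⊗[k] (X ⊗[k] L)) →ₗ[k] (H ⊗[k] (X ⊗[k] L)) :=
  (TensorProduct.homTensorHomMap (RingHom.id k) H (X ⊗[k] L) H (X ⊗[k] L))
    ((TensorProduct.map ((LinearMap.mul k H).flip) (ractL k X L)) (δL l))


open TensorProduct LinearMap

private lemma lact_tmul (s : L) (x : X) (l : L) :
    lactL k H X L a δL s (x ⊗ₜ[k] l) =
      TensorProduct.map (a ∘ₗ (TensorProduct.mk k H X).flip x) (LinearMap.mulRight k l)
        (δL s) := by
  rw [lactL]
  simp only [LinearMap.coe_comp, Function.comp_apply, LinearEquiv.coe_coe]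
  generalize δL s = z
  induction z using TensorProduct.induction_on with
  | zero => simp
  | tmul u v =>
      simp [TensorProduct.homTensorHomMap_apply, LinearMap.mul_apply',
        TensorProduct.curry_apply, LinearMap.mulRight_apply, TensorProduct.mk_apply]
  | add p q hp hq => simp_all [map_add, LinearMap.add_apply]

private lemma ract_tmul (t : L) (x : X) (l : L) :
    ractL k X L t (x ⊗ₜ[k] l) = x ⊗ₜ[k] (l * t) := by
  simp [ractL, LinearMap.lTensorHom, LinearMap.mul_apply']

private lemma coact_tmul (x : X) (l : L) :
    coactP k H X L δX δL (x ⊗ₜ[k] l) =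
      (TensorProduct.map (LinearMap.mul' k H) LinearMap.id)
        ((TensorProduct.tensorTensorTensorComm k H X H L) (δX x ⊗ₜ[k] δL l)) := by
  simp [coactP]

private lemma part1 (hact : ∀ x : X, a ((1:H) ⊗ₜ[k] x) = x) (h1 : δL 1 = 1) :
    lactL k H X L a δL 1 = LinearMap.id := by
  apply TensorProduct.ext'
  intro x l
  rw [lact_tmul, h1, Algebra.TensorProduct.one_def]
  simp [hact]

private lemma part2
    (hact : ∀ (g h : H) (x : X), a ((g*h) ⊗ₜ[k] x) = a (g ⊗ₜ[k] a (h ⊗ₜ[k] x)))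
    (hmul : ∀ b c : L, δL (b*c) = δL b * δL c) (s t : L) :
    lactL k H X L a δL (s*t) = (lactL k H X L a δL s) ∘ₗ (lactL k H X L a δL t) := by
  apply TensorProduct.ext'
  intro x l
  simp only [LinearMap.comp_apply, lact_tmul, hmul]
  generalize δL t = wt
  induction wt using TensorProduct.induction_on with
  | zero => simp
  | tmul c d =>
      rw [TensorProduct.map_tmul, lact_tmul]
      simp only [LinearMap.comp_apply, TensorProduct.mk_apply, LinearMap.flip_apply,
        LinearMap.mulRight_apply]
      generalize δL s = ws
      induction ws using TensorProduct.induction_on with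
      | zero => simp
      | tmul u v => simp [Algebra.TensorProduct.tmul_mul_tmul, hact, mul_assoc]
      | add p q hp hq => simp_all [add_mul, map_add]
  | add p q hp hq => simp_all [mul_add, map_add]

private lemma part3 : ractL k X L 1 = LinearMap.id := by
  apply TensorProduct.ext'
  intro x l
  simp [ract_tmul]

private lemma part4 (s t : L) :
    ractL k X L (s*t) = (ractL k X L t) ∘ₗ (ractL k X L s) := by
  apply TensorProduct.ext'
  intro x l
  simp [ract_tmul, mul_assoc]

private lemma part5 (s t : L) :
    (lactL k H X L a δL s) ∘ₗ (ractL k X L t) = (ractL k X L t) ∘ₗ (lactL k H X L a δL s) := by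
  apply TensorProduct.ext'
  intro x l
  simp only [LinearMap.comp_apply, ract_tmul, lact_tmul]
  generalize δL s = ws
  induction ws using TensorProduct.induction_on with
  | zero => simp
  | tmul u v => simp [ract_tmul, mul_assoc]
  | add p q hp hq => simp_all [map_add]
private lemma comodule_repr {M : Type*} [AddCommGroup M] [Module k M]
    (δ : M →ₗ[k] H ⊗[k] M)
    (hco : (TensorProduct.assoc k H H M).toLinearMap ∘ₗ
      (LinearMap.rTensor M (Coalgebra.comul (R := k))) ∘ₗ δ = (LinearMap.lTensor H δ) ∘ₗ δ)
    (x : M) (S : Finset (H × M)) (hS : δ x = ∑ i ∈ S, i.1 ⊗ₜ[k] i.2)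
    (P : (i : H × M) → Coalgebra.Repr k i.1 (H × H)) :
    ∑ i ∈ S, ∑ α ∈ (P i).index, (P i).left α ⊗ₜ[k] ((P i).right α ⊗ₜ[k] i.2)
      = ∑ i ∈ S, i.1 ⊗ₜ[k] δ i.2 := by
  have h := LinearMap.congr_fun hco x
  simp only [LinearMap.coe_comp, Function.comp_apply, LinearEquiv.coe_coe] at h
  rw [hS, map_sum, map_sum, map_sum] at h
  simp only [LinearMap.rTensor_tmul, LinearMap.lTensor_tmul] at h
  rw [← h]
  refine Finset.sum_congr rfl fun i _ => ?_
  rw [← (P i).eq, TensorProduct.sum_tmul, map_sum]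
  simp [TensorProduct.assoc_tmul]

private lemma counit_smul_repr {M : Type*} [AddCommGroup M] [Module k M]
    (δ : M →ₗ[k] H ⊗[k] M)
    (hcu : (TensorProduct.lid k M).toLinearMap ∘ₗ
      (LinearMap.rTensor M (Coalgebra.counit (R := k))) ∘ₗ δ = LinearMap.id)
    (x : M) (S : Finset (H × M)) (hS : δ x = ∑ i ∈ S, i.1 ⊗ₜ[k] i.2) :
    ∑ i ∈ S, Coalgebra.counit (R := k) i.1 • i.2 = x := by
  have h := LinearMap.congr_fun hcu x
  simp only [LinearMap.coe_comp, Function.comp_apply, LinearEquiv.coe_coe,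
    LinearMap.id_apply] at h
  rw [hS, map_sum, map_sum] at h
  simpa [LinearMap.rTensor_tmul, TensorProduct.lid_tmul] using h

private lemma coact_eval (x : X) (l : L) (SX : Finset (H × X)) (SL : Finset (H × L))
    (hSX : δX x = ∑ i ∈ SX, i.1 ⊗ₜ[k] i.2) (hSL : δL l = ∑ j ∈ SL, j.1 ⊗ₜ[k] j.2) :
    coactP k H X L δX δL (x ⊗ₜ[k] l) =
      ∑ i ∈ SX, ∑ j ∈ SL, (i.1 * j.1) ⊗ₜ[k] (i.2 ⊗ₜ[k] j.2) := by
  rw [coact_tmul, hSX, hSL]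
  rw [TensorProduct.sum_tmul, map_sum, map_sum]
  refine Finset.sum_congr rfl fun i _ => ?_
  rw [TensorProduct.tmul_sum, map_sum, map_sum]
  refine Finset.sum_congr rfl fun j _ => ?_
  simp [TensorProduct.tensorTensorTensorComm_tmul, LinearMap.mul'_apply]

private lemma part6cu
    (hcuX : (TensorProduct.lid k X).toLinearMap ∘ₗ
      (LinearMap.rTensor X (Coalgebra.counit (R := k))) ∘ₗ δX = LinearMap.id)
    (hcuL : (TensorProduct.lid k L).toLinearMap ∘ₗ
      (LinearMap.rTensor L (Coalgebra.counit (R := k))) ∘ₗ δL = LinearMap.id) :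
    (TensorProduct.lid k (X ⊗[k] L)).toLinearMap ∘ₗ
      (LinearMap.rTensor (X ⊗[k] L) (Coalgebra.counit (R := k))) ∘ₗ
        coactP k H X L δX δL = LinearMap.id := by
  apply TensorProduct.ext'
  intro x l
  obtain ⟨SX, hSX⟩ := TensorProduct.exists_finset (R := k) (δX x)
  obtain ⟨SL, hSL⟩ := TensorProduct.exists_finset (R := k) (δL l)
  have hx := counit_smul_repr k H (δ := δX) hcuX x SX hSX
  have hl := counit_smul_repr k H (δ := δL) hcuL l SL hSL
  simp only [LinearMap.coe_comp, Function.comp_apply, LinearEquiv.coe_coe,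
    LinearMap.id_apply]
  rw [coact_eval k H X L δX δL x l SX SL hSX hSL]
  rw [map_sum, map_sum]
  conv_rhs => rw [← hx, ← hl, TensorProduct.sum_tmul]
  refine Finset.sum_congr rfl fun i _ => ?_
  simp only [map_sum]
  rw [TensorProduct.tmul_sum]
  refine Finset.sum_congr rfl fun j _ => ?_
  simp [LinearMap.rTensor_tmul, TensorProduct.lid_tmul, Bialgebra.counit_mul,
    TensorProduct.smul_tmul', TensorProduct.tmul_smul, smul_smul, mul_comm]
set_option synthInstance.maxHeartbeats 1000000 in
private lemma part6co
    (hcoX : (TensorProduct.assoc k H H X).toLinearMap ∘ₗ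
      (LinearMap.rTensor X (Coalgebra.comul (R := k))) ∘ₗ δX = (LinearMap.lTensor H δX) ∘ₗ δX)
    (hcoL : (TensorProduct.assoc k H H L).toLinearMap ∘ₗ
      (LinearMap.rTensor L (Coalgebra.comul (R := k))) ∘ₗ δL = (LinearMap.lTensor H δL) ∘ₗ δL) :
    (TensorProduct.assoc k H H (X ⊗[k] L)).toLinearMap ∘ₗ
      (LinearMap.rTensor (X ⊗[k] L) (Coalgebra.comul (R := k))) ∘ₗ coactP k H X L δX δL =
    (LinearMap.lTensor H (coactP k H X L δX δL)) ∘ₗ coactP k H X L δX δL := by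
  apply TensorProduct.ext'
  intro x l
  obtain ⟨SX, hSX⟩ := TensorProduct.exists_finset (R := k) (δX x)
  obtain ⟨SL, hSL⟩ := TensorProduct.exists_finset (R := k) (δL l)
  have EX := comodule_repr k H (δ := δX) hcoX x SX hSX
    (fun i => Coalgebra.Repr.arbitrary k i.1)
  have EL := comodule_repr k H (δ := δL) hcoL l SL hSL
    (fun j => Coalgebra.Repr.arbitrary k j.1)
  simp only [LinearMap.coe_comp, Function.comp_apply, LinearEquiv.coe_coe]
  rw [coact_eval k H X L δX δL x l SX SL hSX hSL]
  simp only [map_sum]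
  -- abbreviations
  set Xi : (H × L) → ((H ⊗[k] X) →ₗ[k] H ⊗[k] (X ⊗[k] L)) := fun j =>
    (TensorProduct.map (LinearMap.mul' k H) LinearMap.id) ∘ₗ
      (TensorProduct.tensorTensorTensorComm k H X H L).toLinearMap ∘ₗ
      (TensorProduct.mk k (H ⊗[k] X) (H ⊗[k] L)).flip (δL j.2) with hXi
  set Lam : H → (H ⊗[k] X) → ((H ⊗[k] L) →ₗ[k] H ⊗[k] (X ⊗[k] L)) := fun _ v =>
    (TensorProduct.map (LinearMap.mul' k H) LinearMap.id) ∘ₗ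
      (TensorProduct.tensorTensorTensorComm k H X H L).toLinearMap ∘ₗ
      (TensorProduct.mk k (H ⊗[k] X) (H ⊗[k] L) v) with hLam
  -- transform the right-hand side
  have R1 : ∑ i ∈ SX, ∑ j ∈ SL,
      LinearMap.lTensor H (coactP k H X L δX δL) ((i.1 * j.1) ⊗ₜ[k] (i.2 ⊗ₜ[k] j.2)) =
      ∑ j ∈ SL, (TensorProduct.map (LinearMap.mulRight k j.1) (Xi j))
        (∑ i ∈ SX, i.1 ⊗ₜ[k] δX i.2) := by
    rw [Finset.sum_comm]
    refine Finset.sum_congr rfl fun j _ => ?_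
    rw [map_sum]
    refine Finset.sum_congr rfl fun i _ => ?_
    rw [LinearMap.lTensor_tmul, coact_tmul, TensorProduct.map_tmul]
    simp [hXi]
  have R2 : ∑ j ∈ SL, (TensorProduct.map (LinearMap.mulRight k j.1) (Xi j))
        (∑ i ∈ SX, i.1 ⊗ₜ[k] δX i.2) =
      ∑ i ∈ SX, ∑ α ∈ (Coalgebra.Repr.arbitrary k i.1).index, ∑ j ∈ SL,
        (TensorProduct.map (LinearMap.mulLeft k ((Coalgebra.Repr.arbitrary k i.1).left α))
          (Lam i.1 ((Coalgebra.Repr.arbitrary k i.1).right α ⊗ₜ[k] i.2)))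
          (j.1 ⊗ₜ[k] δL j.2) := by
    rw [← EX]
    calc ∑ j ∈ SL, (TensorProduct.map (LinearMap.mulRight k j.1) (Xi j))
          (∑ i ∈ SX, ∑ α ∈ (Coalgebra.Repr.arbitrary k i.1).index,
            (Coalgebra.Repr.arbitrary k i.1).left α ⊗ₜ[k]
              ((Coalgebra.Repr.arbitrary k i.1).right α ⊗ₜ[k] i.2))
        = ∑ j ∈ SL, ∑ i ∈ SX, ∑ α ∈ (Coalgebra.Repr.arbitrary k i.1).index,
            ((Coalgebra.Repr.arbitrary k i.1).left α * j.1) ⊗ₜ[k]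
              (Xi j ((Coalgebra.Repr.arbitrary k i.1).right α ⊗ₜ[k] i.2)) := by
          refine Finset.sum_congr rfl fun j _ => ?_
          rw [map_sum]
          refine Finset.sum_congr rfl fun i _ => ?_
          rw [map_sum]
          refine Finset.sum_congr rfl fun α _ => ?_
          simp
      _ = _ := by
          rw [Finset.sum_comm]
          refine Finset.sum_congr rfl fun i _ => ?_
          rw [Finset.sum_comm]
          refine Finset.sum_congr rfl fun α _ => ?_
          refine Finset.sum_congr rfl fun j _ => ?_
          simp [hXi, hLam]
  have R3 : ∀ i ∈ SX, ∀ α ∈ (Coalgebra.Repr.arbitrary k i.1).index,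
      ∑ j ∈ SL,
        (TensorProduct.map (LinearMap.mulLeft k ((Coalgebra.Repr.arbitrary k i.1).left α))
          (Lam i.1 ((Coalgebra.Repr.arbitrary k i.1).right α ⊗ₜ[k] i.2)))
          (j.1 ⊗ₜ[k] δL j.2) =
      ∑ j ∈ SL, ∑ β ∈ (Coalgebra.Repr.arbitrary k j.1).index,
        ((Coalgebra.Repr.arbitrary k i.1).left α * (Coalgebra.Repr.arbitrary k j.1).left β)
          ⊗ₜ[k] (((Coalgebra.Repr.arbitrary k i.1).right α *
            (Coalgebra.Repr.arbitrary k j.1).right β) ⊗ₜ[k] (i.2 ⊗ₜ[k] j.2)) := by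
    intro i _ α _
    rw [← map_sum, ← EL, map_sum]
    refine Finset.sum_congr rfl fun j _ => ?_
    rw [map_sum]
    refine Finset.sum_congr rfl fun β _ => ?_
    simp [hLam, TensorProduct.tensorTensorTensorComm_tmul, LinearMap.mul'_apply]
  -- now the left-hand side
  calc ∑ i ∈ SX, ∑ j ∈ SL,
        (TensorProduct.assoc k H H (X ⊗[k] L))
          ((LinearMap.rTensor (X ⊗[k] L) (Coalgebra.comul (R := k)))
            ((i.1 * j.1) ⊗ₜ[k] (i.2 ⊗ₜ[k] j.2)))
      = ∑ i ∈ SX, ∑ α ∈ (Coalgebra.Repr.arbitrary k i.1).index, ∑ j ∈ SL,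
          ∑ β ∈ (Coalgebra.Repr.arbitrary k j.1).index,
          ((Coalgebra.Repr.arbitrary k i.1).left α * (Coalgebra.Repr.arbitrary k j.1).left β)
            ⊗ₜ[k] (((Coalgebra.Repr.arbitrary k i.1).right α *
              (Coalgebra.Repr.arbitrary k j.1).right β) ⊗ₜ[k] (i.2 ⊗ₜ[k] j.2)) := by
        refine Finset.sum_congr rfl fun i _ => ?_
        rw [Finset.sum_comm]
        refine Finset.sum_congr rfl fun j _ => ?_
        rw [LinearMap.rTensor_tmul, Bialgebra.comul_mul, ← (Coalgebra.Repr.arbitrary k i.1).eq,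
          ← (Coalgebra.Repr.arbitrary k j.1).eq, Finset.sum_mul_sum]
        rw [TensorProduct.sum_tmul, map_sum]
        refine Finset.sum_congr rfl fun α _ => ?_
        rw [TensorProduct.sum_tmul, map_sum]
        refine Finset.sum_congr rfl fun β _ => ?_
        simp [Algebra.TensorProduct.tmul_mul_tmul, TensorProduct.assoc_tmul]
    _ = ∑ i ∈ SX, ∑ j ∈ SL,
        LinearMap.lTensor H (coactP k H X L δX δL) ((i.1 * j.1) ⊗ₜ[k] (i.2 ⊗ₜ[k] j.2)) := by
        rw [R1, R2]
        refine Finset.sum_congr rfl fun i hi => ?_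
        refine Finset.sum_congr rfl fun α hα => ?_
        rw [R3 i hi α hα]
set_option synthInstance.maxHeartbeats 1000000
set_option maxHeartbeats 1000000
private noncomputable def Theta : ((H ⊗[k] X) ⊗[k] (H ⊗[k] L)) →ₗ[k] H ⊗[k] (X ⊗[k] L) :=
  (TensorProduct.map (LinearMap.mul' k H) LinearMap.id) ∘ₗ
    (TensorProduct.tensorTensorTensorComm k H X H L).toLinearMap

private lemma Theta_tmul (g h : H) (x' : X) (l' : L) :
    Theta k H X L ((g ⊗ₜ[k] x') ⊗ₜ[k] (h ⊗ₜ[k] l')) = (g * h) ⊗ₜ[k] (x' ⊗ₜ[k] l') := by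
  simp [Theta, TensorProduct.tensorTensorTensorComm_tmul, LinearMap.mul'_apply]

private lemma coact_tmul' (x : X) (l : L) :
    coactP k H X L δX δL (x ⊗ₜ[k] l) = Theta k H X L (δX x ⊗ₜ[k] δL l) := by
  rw [coact_tmul]; simp [Theta]

private lemma ydRHS_tmul (g : H) (x : X) (SX : Finset (H × X))
    (hSX : δX x = ∑ i ∈ SX, i.1 ⊗ₜ[k] i.2) {ι : Type*} (T : Finset ι) (A B C : ι → H)
    (hT : ∑ j ∈ T, A j ⊗ₜ[k] (B j ⊗ₜ[k] C j) =
      LinearMap.lTensor H (Coalgebra.comul (R := k)) (Coalgebra.comul (R := k) g)) :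
    ydRHS k H X a δX (g ⊗ₜ[k] x) =
      ∑ j ∈ T, ∑ i ∈ SX,
        ((A j * i.1) * HopfAlgebra.antipode k (C j)) ⊗ₜ[k] a (B j ⊗ₜ[k] i.2) := by
  rw [ydRHS]
  simp only [LinearMap.coe_comp, Function.comp_apply, LinearEquiv.coe_coe]
  rw [TensorProduct.map_tmul]
  simp only [LinearMap.coe_comp, Function.comp_apply]
  rw [← hT, hSX]
  rw [TensorProduct.sum_tmul]
  simp only [map_sum]
  refine Finset.sum_congr rfl fun j _ => ?_
  rw [TensorProduct.tmul_sum]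
  simp only [map_sum]
  refine Finset.sum_congr rfl fun i _ => ?_
  simp [TensorProduct.tensorTensorTensorComm_tmul, TensorProduct.comm_tmul,
    TensorProduct.assoc_tmul, TensorProduct.assoc_symm_tmul, LinearMap.mul'_apply]

private lemma comul_comul_eval (g : H) :
    LinearMap.lTensor H (Coalgebra.comul (R := k)) (Coalgebra.comul (R := k) g) =
      ∑ β ∈ (Coalgebra.Repr.arbitrary k g).index,
        ∑ γ ∈ (Coalgebra.Repr.arbitrary k ((Coalgebra.Repr.arbitrary k g).left β)).index,
          (Coalgebra.Repr.arbitrary k ((Coalgebra.Repr.arbitrary k g).left β)).left γ ⊗ₜ[k]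
            ((Coalgebra.Repr.arbitrary k ((Coalgebra.Repr.arbitrary k g).left β)).right γ ⊗ₜ[k]
              (Coalgebra.Repr.arbitrary k g).right β) := by
  rw [← Coalgebra.coassoc_apply g, ← (Coalgebra.Repr.arbitrary k g).eq, map_sum, map_sum]
  refine Finset.sum_congr rfl fun β _ => ?_
  rw [LinearMap.rTensor_tmul,
    ← (Coalgebra.Repr.arbitrary k ((Coalgebra.Repr.arbitrary k g).left β)).eq,
    TensorProduct.sum_tmul, map_sum]
  simp [TensorProduct.assoc_tmul]

private lemma ydRHS_eval (g : H) (x : X) (SX : Finset (H × X))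
    (hSX : δX x = ∑ i ∈ SX, i.1 ⊗ₜ[k] i.2) :
    ydRHS k H X a δX (g ⊗ₜ[k] x) =
      ∑ β ∈ (Coalgebra.Repr.arbitrary k g).index,
        ∑ γ ∈ (Coalgebra.Repr.arbitrary k ((Coalgebra.Repr.arbitrary k g).left β)).index,
          ∑ i ∈ SX,
          (((Coalgebra.Repr.arbitrary k ((Coalgebra.Repr.arbitrary k g).left β)).left γ * i.1) *
            HopfAlgebra.antipode k ((Coalgebra.Repr.arbitrary k g).right β)) ⊗ₜ[k]
          a ((Coalgebra.Repr.arbitrary k ((Coalgebra.Repr.arbitrary k g).left β)).right γ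
              ⊗ₜ[k] i.2) := by
  rw [ydRHS_tmul k H X a δX g x SX hSX
    ((Coalgebra.Repr.arbitrary k g).index.sigma
      (fun β => (Coalgebra.Repr.arbitrary k ((Coalgebra.Repr.arbitrary k g).left β)).index))
    (fun p => (Coalgebra.Repr.arbitrary k ((Coalgebra.Repr.arbitrary k g).left p.1)).left p.2)
    (fun p => (Coalgebra.Repr.arbitrary k ((Coalgebra.Repr.arbitrary k g).left p.1)).right p.2)
    (fun p => (Coalgebra.Repr.arbitrary k g).right p.1)
    (by rw [Finset.sum_sigma]; exact (comul_comul_eval k H g).symm)]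
  rw [Finset.sum_sigma]
private noncomputable def Cmap (i1 : H) (i2 : X) (m1 : H) (m2 : L) :
    (H ⊗[k] (H ⊗[k] (H ⊗[k] (H ⊗[k] L)))) →ₗ[k] H ⊗[k] (X ⊗[k] L) :=
  (LinearMap.rTensor (X ⊗[k] L) (LinearMap.mul' k H) ∘ₗ
    (TensorProduct.assoc k H H (X ⊗[k] L)).symm.toLinearMap ∘ₗ
    LinearMap.rTensor (H ⊗[k] (X ⊗[k] L)) (LinearMap.mulRight k i1)) ∘ₗ
  LinearMap.lTensor H
    (((TensorProduct.assoc k H X L).toLinearMap ∘ₗ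
      LinearMap.rTensor L (TensorProduct.comm k X H).toLinearMap ∘ₗ
      (TensorProduct.assoc k X H L).symm.toLinearMap ∘ₗ
      LinearMap.rTensor (H ⊗[k] L) (a ∘ₗ (TensorProduct.mk k H X).flip i2)) ∘ₗ
    LinearMap.lTensor H
      ((LinearMap.rTensor L (LinearMap.mul' k H) ∘ₗ
        (TensorProduct.assoc k H H L).symm.toLinearMap ∘ₗ
        LinearMap.rTensor (H ⊗[k] L) (HopfAlgebra.antipode k)) ∘ₗ
      LinearMap.lTensor H
        (TensorProduct.map (LinearMap.mulRight k m1) (LinearMap.mulRight k m2))))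

private lemma Cmap_tmul (i1 : H) (i2 : X) (m1 : H) (m2 : L) (g₁ g₂ g₃ g₄ : H) (o : L) :
    Cmap k H X L a i1 i2 m1 m2 (g₁ ⊗ₜ[k] (g₂ ⊗ₜ[k] (g₃ ⊗ₜ[k] (g₄ ⊗ₜ[k] o)))) =
      ((g₁ * i1) * (HopfAlgebra.antipode k g₃ * (g₄ * m1))) ⊗ₜ[k]
        (a (g₂ ⊗ₜ[k] i2) ⊗ₜ[k] (o * m2)) := by
  simp [Cmap, TensorProduct.assoc_tmul, TensorProduct.assoc_symm_tmul,
    TensorProduct.comm_tmul, LinearMap.mul'_apply]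

private noncomputable def Dmap (i1 : H) (i2 : X) (m1 : H) (m2 : L) :
    (H ⊗[k] (H ⊗[k] L)) →ₗ[k] H ⊗[k] (X ⊗[k] L) :=
  TensorProduct.map (LinearMap.mulRight k (i1 * m1))
    (TensorProduct.map (a ∘ₗ (TensorProduct.mk k H X).flip i2) (LinearMap.mulRight k m2))

private lemma Dmap_tmul (i1 : H) (i2 : X) (m1 : H) (m2 : L) (g h : H) (o : L) :
    Dmap k H X L a i1 i2 m1 m2 (g ⊗ₜ[k] (h ⊗ₜ[k] o)) =
      (g * (i1 * m1)) ⊗ₜ[k] (a (h ⊗ₜ[k] i2) ⊗ₜ[k] (o * m2)) := by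
  simp [Dmap, mul_assoc]

private noncomputable def chiMap (v : L) :
    (H ⊗[k] (H ⊗[k] H)) →ₗ[k] (H ⊗[k] (H ⊗[k] (H ⊗[k] (H ⊗[k] L)))) :=
  (TensorProduct.assoc k H H (H ⊗[k] (H ⊗[k] L))).toLinearMap ∘ₗ
    LinearMap.rTensor (H ⊗[k] (H ⊗[k] L)) (Coalgebra.comul (R := k)) ∘ₗ
    LinearMap.lTensor H (LinearMap.lTensor H ((TensorProduct.mk k H L).flip v))

private lemma chiMap_tmul (v : L) (g h e : H) :
    chiMap k H L v (g ⊗ₜ[k] (h ⊗ₜ[k] e)) =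
      ∑ γ ∈ (Coalgebra.Repr.arbitrary k g).index,
        (Coalgebra.Repr.arbitrary k g).left γ ⊗ₜ[k]
          ((Coalgebra.Repr.arbitrary k g).right γ ⊗ₜ[k] (h ⊗ₜ[k] (e ⊗ₜ[k] v))) := by
  simp only [chiMap, LinearMap.coe_comp, Function.comp_apply, LinearEquiv.coe_coe,
    LinearMap.lTensor_tmul, LinearMap.rTensor_tmul, TensorProduct.mk_apply,
    LinearMap.flip_apply]
  rw [← (Coalgebra.Repr.arbitrary k g).eq, TensorProduct.sum_tmul, map_sum]
  simp [TensorProduct.assoc_tmul]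

private noncomputable def XiMap :
    (H ⊗[k] (H ⊗[k] L)) →ₗ[k] (H ⊗[k] (H ⊗[k] (H ⊗[k] (H ⊗[k] L)))) :=
  (TensorProduct.assoc k H H (H ⊗[k] (H ⊗[k] L))).toLinearMap ∘ₗ
    LinearMap.rTensor (H ⊗[k] (H ⊗[k] L)) (Coalgebra.comul (R := k)) ∘ₗ
    LinearMap.lTensor H ((TensorProduct.assoc k H H L).toLinearMap ∘ₗ
      LinearMap.rTensor L (Coalgebra.comul (R := k)))

private lemma XiMap_tmul (g h : H) (o : L) :
    XiMap k H L (g ⊗ₜ[k] (h ⊗ₜ[k] o)) =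
      ∑ α ∈ (Coalgebra.Repr.arbitrary k g).index,
        ∑ β ∈ (Coalgebra.Repr.arbitrary k h).index,
          (Coalgebra.Repr.arbitrary k g).left α ⊗ₜ[k]
            ((Coalgebra.Repr.arbitrary k g).right α ⊗ₜ[k]
              ((Coalgebra.Repr.arbitrary k h).left β ⊗ₜ[k]
                ((Coalgebra.Repr.arbitrary k h).right β ⊗ₜ[k] o))) := by
  simp only [XiMap, LinearMap.coe_comp, Function.comp_apply, LinearEquiv.coe_coe,
    LinearMap.lTensor_tmul, LinearMap.rTensor_tmul]
  rw [← (Coalgebra.Repr.arbitrary k h).eq, TensorProduct.sum_tmul, map_sum]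
  rw [← (Coalgebra.Repr.arbitrary k g).eq]
  simp only [TensorProduct.assoc_tmul, TensorProduct.tmul_sum, TensorProduct.sum_tmul,
    map_sum, LinearMap.lTensor_tmul, LinearMap.rTensor_tmul]
  exact Finset.sum_comm

private noncomputable def F1map (x : X) (z : H ⊗[k] L) :
    (H ⊗[k] (H ⊗[k] L)) →ₗ[k] H ⊗[k] (X ⊗[k] L) :=
  Theta k H X L ∘ₗ TensorProduct.map
    (ydRHS k H X a δX ∘ₗ (TensorProduct.mk k H X).flip x) (LinearMap.mulRight k z)

private lemma F1map_tmul (x : X) (z : H ⊗[k] L) (g : H) (ω : H ⊗[k] L) :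
    F1map k H X L a δX x z (g ⊗ₜ[k] ω) =
      Theta k H X L (ydRHS k H X a δX (g ⊗ₜ[k] x) ⊗ₜ[k] (ω * z)) := by
  simp [F1map, LinearMap.mulRight_apply]

private noncomputable def Phimap (b : H) (x' : X) (c : L) :
    (H ⊗[k] L) →ₗ[k] H ⊗[k] (X ⊗[k] L) :=
  TensorProduct.map (LinearMap.mulLeft k b) ((TensorProduct.mk k X L x') ∘ₗ LinearMap.mulLeft k c)

private lemma Phimap_tmul (b : H) (x' : X) (c : L) (y : H) (o : L) :
    Phimap k H X L b x' c (y ⊗ₜ[k] o) = (b * y) ⊗ₜ[k] (x' ⊗ₜ[k] (c * o)) := by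
  simp [Phimap]

private lemma AA_tmul (s : L) (SS : Finset (H × L)) (hSS : δL s = ∑ n ∈ SS, n.1 ⊗ₜ[k] n.2)
    (π : H) (ρ : X ⊗[k] L) :
    AA k H X L a δL s (π ⊗ₜ[k] ρ) =
      ∑ n ∈ SS, (n.1 * π) ⊗ₜ[k] (lactL k H X L a δL n.2 ρ) := by
  rw [AA, hSS, map_sum, map_sum]
  rw [LinearMap.coe_sum, Finset.sum_apply]
  refine Finset.sum_congr rfl fun n _ => ?_
  rw [TensorProduct.map_tmul, TensorProduct.homTensorHomMap_apply, TensorProduct.map_tmul]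
  simp [LinearMap.mul_apply']

private lemma BB_tmul (t : L) (ST : Finset (H × L)) (hST : δL t = ∑ n ∈ ST, n.1 ⊗ₜ[k] n.2)
    (π : H) (ρ : X ⊗[k] L) :
    BB k H X L δL t (π ⊗ₜ[k] ρ) =
      ∑ n ∈ ST, (π * n.1) ⊗ₜ[k] (ractL k X L n.2 ρ) := by
  rw [BB, hST, map_sum, map_sum]
  rw [LinearMap.coe_sum, Finset.sum_apply]
  refine Finset.sum_congr rfl fun n _ => ?_
  rw [TensorProduct.map_tmul, TensorProduct.homTensorHomMap_apply, TensorProduct.map_tmul]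
  simp [LinearMap.mul_apply', LinearMap.flip_apply]

private lemma sum_perm4 {M : Type*} [AddCommMonoid M] {ι₁ ι₂ ι₃ ι₄ : Type*}
    (s₁ : Finset ι₁) (s₂ : ι₁ → Finset ι₂) (s₃ : Finset ι₃) (s₄ : Finset ι₄)
    (F : ι₁ → ι₂ → ι₃ → ι₄ → M) :
    ∑ c ∈ s₁, ∑ γ ∈ s₂ c, ∑ i ∈ s₃, ∑ m ∈ s₄, F c γ i m =
    ∑ i ∈ s₃, ∑ m ∈ s₄, ∑ c ∈ s₁, ∑ γ ∈ s₂ c, F c γ i m := by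
  calc ∑ c ∈ s₁, ∑ γ ∈ s₂ c, ∑ i ∈ s₃, ∑ m ∈ s₄, F c γ i m
      = ∑ c ∈ s₁, ∑ i ∈ s₃, ∑ γ ∈ s₂ c, ∑ m ∈ s₄, F c γ i m :=
        Finset.sum_congr rfl fun c _ => Finset.sum_comm
    _ = ∑ i ∈ s₃, ∑ c ∈ s₁, ∑ γ ∈ s₂ c, ∑ m ∈ s₄, F c γ i m := Finset.sum_comm
    _ = ∑ i ∈ s₃, ∑ c ∈ s₁, ∑ m ∈ s₄, ∑ γ ∈ s₂ c, F c γ i m :=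
        Finset.sum_congr rfl fun i _ => Finset.sum_congr rfl fun c _ => Finset.sum_comm
    _ = ∑ i ∈ s₃, ∑ m ∈ s₄, ∑ c ∈ s₁, ∑ γ ∈ s₂ c, F c γ i m :=
        Finset.sum_congr rfl fun i _ => Finset.sum_comm

private lemma sum_perm5 {M : Type*} [AddCommMonoid M] {ι₁ ι₂ ι₃ ι₄ ι₅ : Type*}
    (s₁ : Finset ι₁) (s₂ : Finset ι₂) (s₃ : Finset ι₃) (s₄ : Finset ι₄)
    (s₅ : ι₄ → Finset ι₅) (F : ι₁ → ι₂ → ι₃ → ι₄ → ι₅ → M) :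
    ∑ i ∈ s₁, ∑ g ∈ s₂, ∑ h ∈ s₃, ∑ n ∈ s₄, ∑ c ∈ s₅ n, F i g h n c =
    ∑ n ∈ s₄, ∑ c ∈ s₅ n, ∑ i ∈ s₁, ∑ g ∈ s₂, ∑ h ∈ s₃, F i g h n c := by
  calc ∑ i ∈ s₁, ∑ g ∈ s₂, ∑ h ∈ s₃, ∑ n ∈ s₄, ∑ c ∈ s₅ n, F i g h n c
      = ∑ i ∈ s₁, ∑ g ∈ s₂, ∑ n ∈ s₄, ∑ h ∈ s₃, ∑ c ∈ s₅ n, F i g h n c :=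
        Finset.sum_congr rfl fun i _ => Finset.sum_congr rfl fun g _ => Finset.sum_comm
    _ = ∑ i ∈ s₁, ∑ n ∈ s₄, ∑ g ∈ s₂, ∑ h ∈ s₃, ∑ c ∈ s₅ n, F i g h n c :=
        Finset.sum_congr rfl fun i _ => Finset.sum_comm
    _ = ∑ n ∈ s₄, ∑ i ∈ s₁, ∑ g ∈ s₂, ∑ h ∈ s₃, ∑ c ∈ s₅ n, F i g h n c := Finset.sum_comm
    _ = ∑ n ∈ s₄, ∑ i ∈ s₁, ∑ g ∈ s₂, ∑ c ∈ s₅ n, ∑ h ∈ s₃, F i g h n c :=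
        Finset.sum_congr rfl fun n _ => Finset.sum_congr rfl fun i _ =>
          Finset.sum_congr rfl fun g _ => Finset.sum_comm
    _ = ∑ n ∈ s₄, ∑ i ∈ s₁, ∑ c ∈ s₅ n, ∑ g ∈ s₂, ∑ h ∈ s₃, F i g h n c :=
        Finset.sum_congr rfl fun n _ => Finset.sum_congr rfl fun i _ => Finset.sum_comm
    _ = ∑ n ∈ s₄, ∑ c ∈ s₅ n, ∑ i ∈ s₁, ∑ g ∈ s₂, ∑ h ∈ s₃, F i g h n c :=
        Finset.sum_congr rfl fun n _ => Finset.sum_comm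

private lemma part7
    (hyd : δX ∘ₗ a = ydRHS k H X a δX)
    (hcoL : (TensorProduct.assoc k H H L).toLinearMap ∘ₗ
      (LinearMap.rTensor L (Coalgebra.comul (R := k))) ∘ₗ δL = (LinearMap.lTensor H δL) ∘ₗ δL)
    (hcuL : (TensorProduct.lid k L).toLinearMap ∘ₗ
      (LinearMap.rTensor L (Coalgebra.counit (R := k))) ∘ₗ δL = LinearMap.id)
    (hmulL : ∀ b c : L, δL (b * c) = δL b * δL c) (s t : L) :
    (coactP k H X L δX δL) ∘ₗ (lactL k H X L a δL s) ∘ₗ (ractL k X L t) =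
      (AA k H X L a δL s) ∘ₗ (BB k H X L δL t) ∘ₗ (coactP k H X L δX δL) := by
  apply TensorProduct.ext'
  intro x l
  obtain ⟨SX, hSX⟩ := TensorProduct.exists_finset (R := k) (δX x)
  obtain ⟨SZ, hSZ⟩ := TensorProduct.exists_finset (R := k) (δL l * δL t)
  obtain ⟨SS, hSS⟩ := TensorProduct.exists_finset (R := k) (δL s)
  obtain ⟨SL2, hSL2⟩ := TensorProduct.exists_finset (R := k) (δL l)
  obtain ⟨ST, hST⟩ := TensorProduct.exists_finset (R := k) (δL t)
  choose SV hSV using fun v : L => TensorProduct.exists_finset (R := k) (δL v)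
  have E1 := comodule_repr k H (δ := δL) hcoL s SS hSS
    (fun n => Coalgebra.Repr.arbitrary k n.1)
  set Chat : (H ⊗[k] (H ⊗[k] (H ⊗[k] (H ⊗[k] L)))) →ₗ[k] H ⊗[k] (X ⊗[k] L) :=
    ∑ i ∈ SX, ∑ m ∈ SZ, Cmap k H X L a i.1 i.2 m.1 m.2 with hChat
  set Dhat : (H ⊗[k] (H ⊗[k] L)) →ₗ[k] H ⊗[k] (X ⊗[k] L) :=
    ∑ i ∈ SX, ∑ m ∈ SZ, Dmap k H X L a i.1 i.2 m.1 m.2 with hDhat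
  have hChat_apply : ∀ w, Chat w = ∑ i ∈ SX, ∑ m ∈ SZ, Cmap k H X L a i.1 i.2 m.1 m.2 w := by
    intro w; rw [hChat]; simp [LinearMap.coe_sum, Finset.sum_apply]
  have hDhat_apply : ∀ w, Dhat w = ∑ i ∈ SX, ∑ m ∈ SZ, Dmap k H X L a i.1 i.2 m.1 m.2 w := by
    intro w; rw [hDhat]; simp [LinearMap.coe_sum, Finset.sum_apply]
  simp only [LinearMap.comp_apply]
  -- Step 1: the left-hand side as F1map applied to (lTensor H δL) (δL s)
  have h1 : coactP k H X L δX δL (lactL k H X L a δL s (ractL k X L t (x ⊗ₜ[k] l))) =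
      F1map k H X L a δX x (δL l * δL t) ((LinearMap.lTensor H δL) (δL s)) := by
    rw [ract_tmul, lact_tmul, hSS]
    simp only [map_sum]
    refine Finset.sum_congr rfl fun n _ => ?_
    rw [TensorProduct.map_tmul, LinearMap.lTensor_tmul, coact_tmul', F1map_tmul]
    simp only [LinearMap.comp_apply, TensorProduct.mk_apply, LinearMap.flip_apply,
      LinearMap.mulRight_apply]
    have hy := LinearMap.congr_fun hyd (n.1 ⊗ₜ[k] x)
    simp only [LinearMap.comp_apply] at hy
    rw [hy, hmulL, hmulL]
  -- Step 2: rewrite (lTensor H δL) (δL s) via the comodule representation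
  have h2 : (LinearMap.lTensor H δL) (δL s) =
      ∑ n ∈ SS, ∑ α ∈ (Coalgebra.Repr.arbitrary k n.1).index, (Coalgebra.Repr.arbitrary k n.1).left α ⊗ₜ[k] ((Coalgebra.Repr.arbitrary k n.1).right α ⊗ₜ[k] n.2) := by
    rw [hSS, map_sum]
    simp only [LinearMap.lTensor_tmul]
    exact E1.symm
  -- Step 3: evaluate F1map on that sum, obtaining Chat applied to Wmid
  have h3 : F1map k H X L a δX x (δL l * δL t)
      (∑ n ∈ SS, ∑ α ∈ (Coalgebra.Repr.arbitrary k n.1).index, (Coalgebra.Repr.arbitrary k n.1).left α ⊗ₜ[k] ((Coalgebra.Repr.arbitrary k n.1).right α ⊗ₜ[k] n.2)) =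
      Chat (∑ n ∈ SS, ∑ α ∈ (Coalgebra.Repr.arbitrary k n.1).index, ∑ β ∈ (Coalgebra.Repr.arbitrary k ((Coalgebra.Repr.arbitrary k n.1).left α)).index, ∑ γ ∈ (Coalgebra.Repr.arbitrary k ((Coalgebra.Repr.arbitrary k ((Coalgebra.Repr.arbitrary k n.1).left α)).left β)).index, (Coalgebra.Repr.arbitrary k ((Coalgebra.Repr.arbitrary k ((Coalgebra.Repr.arbitrary k n.1).left α)).left β)).left γ ⊗ₜ[k] ((Coalgebra.Repr.arbitrary k ((Coalgebra.Repr.arbitrary k ((Coalgebra.Repr.arbitrary k n.1).left α)).left β)).right γ ⊗ₜ[k] ((Coalgebra.Repr.arbitrary k ((Coalgebra.Repr.arbitrary k n.1).left α)).right β ⊗ₜ[k] ((Coalgebra.Repr.arbitrary k n.1).right α ⊗ₜ[k] n.2)))) := by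
    simp only [map_sum]
    refine Finset.sum_congr rfl fun n _ => ?_
    refine Finset.sum_congr rfl fun α _ => ?_
    rw [F1map_tmul, ydRHS_eval k H X a δX _ x SX hSX]
    have hsplit : ((Coalgebra.Repr.arbitrary k n.1).right α ⊗ₜ[k] n.2) * (δL l * δL t) =
        ∑ m ∈ SZ, ((Coalgebra.Repr.arbitrary k n.1).right α * m.1) ⊗ₜ[k] (n.2 * m.2) := by
      rw [hSZ, Finset.mul_sum]
      exact Finset.sum_congr rfl fun m _ => by rw [Algebra.TensorProduct.tmul_mul_tmul]
    rw [hsplit]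
    simp only [TensorProduct.sum_tmul, TensorProduct.tmul_sum, map_sum]
    rw [Finset.sum_comm]
    refine Finset.sum_congr rfl fun β _ => ?_
    rw [Finset.sum_comm]
    refine Finset.sum_congr rfl fun γ _ => ?_
    rw [Finset.sum_comm, hChat_apply]
    refine Finset.sum_congr rfl fun i _ => ?_
    refine Finset.sum_congr rfl fun m _ => ?_
    rw [Theta_tmul, Cmap_tmul, mul_assoc]
  -- Step 4: Wmid = WmidL (coassociativity of comul, transported by chiMap)
  have h4 : (∑ n ∈ SS, ∑ α ∈ (Coalgebra.Repr.arbitrary k n.1).index, ∑ β ∈ (Coalgebra.Repr.arbitrary k ((Coalgebra.Repr.arbitrary k n.1).left α)).index, ∑ γ ∈ (Coalgebra.Repr.arbitrary k ((Coalgebra.Repr.arbitrary k ((Coalgebra.Repr.arbitrary k n.1).left α)).left β)).index, (Coalgebra.Repr.arbitrary k ((Coalgebra.Repr.arbitrary k ((Coalgebra.Repr.arbitrary k n.1).left α)).left β)).left γ ⊗ₜ[k] ((Coalgebra.Repr.arbitrary k ((Coalgebra.Repr.arbitrary k ((Coalgebra.Repr.arbitrary k n.1).left α)).left β)).right γ ⊗ₜ[k]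 ((Coalgebra.Repr.arbitrary k ((Coalgebra.Repr.arbitrary k n.1).left α)).right β ⊗ₜ[k] ((Coalgebra.Repr.arbitrary k n.1).right α ⊗ₜ[k] n.2)))) = (∑ n ∈ SS, ∑ α ∈ (Coalgebra.Repr.arbitrary k n.1).index, ∑ β ∈ (Coalgebra.Repr.arbitrary k ((Coalgebra.Repr.arbitrary k n.1).left α)).index, ∑ γ ∈ (Coalgebra.Repr.arbitrary k ((Coalgebra.Repr.arbitrary k n.1).right α)).index, (Coalgebra.Repr.arbitrary k ((Coalgebra.Repr.arbitrary k n.1).left α)).left β ⊗ₜ[k] ((Coalgebra.Repr.arbitrary k ((Coalgebra.Repr.arbitrary k n.1).left α)).right β ⊗ₜ[k] ((Coalgebra.Repr.arbitrary k ((Coalgebra.Repr.arbitrary k n.1).right α)).left γ ⊗ₜ[k] ((Coalgebra.Repr.arbitrary k ((Coalgebra.Repr.arbitrary k n.1).right α)).right γ ⊗ₜ[k] n.2)))) := by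
    refine Finset.sum_congr rfl fun n _ => ?_
    have h := congrArg (chiMap k H L n.2)
      (Coalgebra.sum_tmul_tmul_eq (Coalgebra.Repr.arbitrary k n.1)
        (fun α => Coalgebra.Repr.arbitrary k ((Coalgebra.Repr.arbitrary k n.1).left α))
        (fun α => Coalgebra.Repr.arbitrary k ((Coalgebra.Repr.arbitrary k n.1).right α)))
    simp only [map_sum, chiMap_tmul] at h
    rw [h]
    refine Finset.sum_congr rfl fun α _ => ?_
    exact Finset.sum_comm
  -- Step 5: WmidL = W2 (comodule coassociativity, transported by XiMap)
  have h5 : (∑ n ∈ SS, ∑ α ∈ (Coalgebra.Repr.arbitrary k n.1).index, ∑ β ∈ (Coalgebra.Repr.arbitrary k ((Coalgebra.Repr.arbitrary k n.1).left α)).index, ∑ γ ∈ (Coalgebra.Repr.arbitrary k ((Coalgebra.Repr.arbitrary k n.1).right α)).index, (Coalgebra.Repr.arbitrary k ((Coalgebra.Repr.arbitrary k n.1).left α)).left β ⊗ₜ[k] ((Coalgebra.Repr.arbitrary k ((Coalgebra.Repr.arbitrary k n.1).left α)).right β ⊗ₜ[k] ((Coalgebra.Repr.arbitrary k ((Coalgebra.Repr.arbitrary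 k n.1).right α)).left γ ⊗ₜ[k] ((Coalgebra.Repr.arbitrary k ((Coalgebra.Repr.arbitrary k n.1).right α)).right γ ⊗ₜ[k] n.2)))) = (∑ n ∈ SS, ∑ c ∈ SV n.2, ∑ α ∈ (Coalgebra.Repr.arbitrary k n.1).index, ∑ γ ∈ (Coalgebra.Repr.arbitrary k c.1).index, (Coalgebra.Repr.arbitrary k n.1).left α ⊗ₜ[k] ((Coalgebra.Repr.arbitrary k n.1).right α ⊗ₜ[k] ((Coalgebra.Repr.arbitrary k c.1).left γ ⊗ₜ[k] ((Coalgebra.Repr.arbitrary k c.1).right γ ⊗ₜ[k] c.2)))) := by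
    have h := congrArg (XiMap k H L) E1
    simp only [map_sum, XiMap_tmul] at h
    rw [h]
    refine Finset.sum_congr rfl fun n _ => ?_
    rw [hSV n.2, TensorProduct.tmul_sum, map_sum]
    simp only [XiMap_tmul]
  -- Step 6: the antipode/counit collapse
  have h6 : Chat (∑ n ∈ SS, ∑ c ∈ SV n.2, ∑ α ∈ (Coalgebra.Repr.arbitrary k n.1).index, ∑ γ ∈ (Coalgebra.Repr.arbitrary k c.1).index, (Coalgebra.Repr.arbitrary k n.1).left α ⊗ₜ[k] ((Coalgebra.Repr.arbitrary k n.1).right α ⊗ₜ[k] ((Coalgebra.Repr.arbitrary k c.1).left γ ⊗ₜ[k] ((Coalgebra.Repr.arbitrary k c.1).right γ ⊗ₜ[k] c.2)))) = Dhat (∑ n ∈ SS, ∑ α ∈ (Coalgebra.Repr.arbitrary k n.1).index, (Coalgebra.Repr.arbitrary k n.1).left α ⊗ₜ[k] ((Coalgebra.Repr.arbitrary k n.1).right α ⊗ₜ[k] n.2)) := by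
    simp only [map_sum]
    refine Finset.sum_congr rfl fun n hn => ?_
    rw [Finset.sum_comm]
    refine Finset.sum_congr rfl fun α _ => ?_
    simp only [hChat_apply, Cmap_tmul]
    rw [hDhat_apply]
    refine Eq.trans (sum_perm4 (SV n.2)
      (fun c => (Coalgebra.Repr.arbitrary k c.1).index) SX SZ _) ?_
    refine Finset.sum_congr rfl fun i _ => ?_
    refine Finset.sum_congr rfl fun m _ => ?_
    rw [Dmap_tmul]
    have hcu := counit_smul_repr k H (δ := δL) hcuL n.2 (SV n.2) (hSV n.2)
    calc ∑ c ∈ SV n.2, ∑ γ ∈ (Coalgebra.Repr.arbitrary k c.1).index,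
          (((Coalgebra.Repr.arbitrary k n.1).left α * i.1) *
            (HopfAlgebra.antipode k ((Coalgebra.Repr.arbitrary k c.1).left γ) *
              ((Coalgebra.Repr.arbitrary k c.1).right γ * m.1))) ⊗ₜ[k]
            (a ((Coalgebra.Repr.arbitrary k n.1).right α ⊗ₜ[k] i.2) ⊗ₜ[k] (c.2 * m.2))
        = ∑ c ∈ SV n.2, Coalgebra.counit (R := k) c.1 •
            ((((Coalgebra.Repr.arbitrary k n.1).left α * i.1) * m.1) ⊗ₜ[k]
              (a ((Coalgebra.Repr.arbitrary k n.1).right α ⊗ₜ[k] i.2) ⊗ₜ[k] (c.2 * m.2))) := by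
          refine Finset.sum_congr rfl fun c _ => ?_
          rw [← TensorProduct.sum_tmul, ← Finset.mul_sum]
          have hγ : (∑ γ ∈ (Coalgebra.Repr.arbitrary k c.1).index,
              HopfAlgebra.antipode k ((Coalgebra.Repr.arbitrary k c.1).left γ) *
                ((Coalgebra.Repr.arbitrary k c.1).right γ * m.1)) =
              Coalgebra.counit (R := k) c.1 • m.1 := by
            simp only [← mul_assoc]
            rw [← Finset.sum_mul, HopfAlgebra.sum_antipode_mul_eq_algebraMap_counit, ← Algebra.smul_def]
          rw [hγ, mul_smul_comm, TensorProduct.smul_tmul']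
      _ = ((Coalgebra.Repr.arbitrary k n.1).left α * (i.1 * m.1)) ⊗ₜ[k]
            (a ((Coalgebra.Repr.arbitrary k n.1).right α ⊗ₜ[k] i.2) ⊗ₜ[k] (n.2 * m.2)) := by
          conv_rhs => rw [← hcu, Finset.sum_mul]
          simp only [smul_mul_assoc, TensorProduct.tmul_sum, TensorProduct.tmul_smul,
            mul_assoc]
  -- Step 7: Dhat on the other representation
  have h7 : Dhat (∑ n ∈ SS, ∑ α ∈ (Coalgebra.Repr.arbitrary k n.1).index, (Coalgebra.Repr.arbitrary k n.1).left α ⊗ₜ[k] ((Coalgebra.Repr.arbitrary k n.1).right α ⊗ₜ[k] n.2)) =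
      ∑ n ∈ SS, ∑ c ∈ SV n.2, ∑ i ∈ SX, ∑ m ∈ SZ,
        (n.1 * (i.1 * m.1)) ⊗ₜ[k] (a (c.1 ⊗ₜ[k] i.2) ⊗ₜ[k] (c.2 * m.2)) := by
    rw [E1, map_sum]
    refine Finset.sum_congr rfl fun n _ => ?_
    rw [hSV n.2, TensorProduct.tmul_sum, map_sum]
    refine Finset.sum_congr rfl fun c _ => ?_
    rw [hDhat_apply]
    refine Finset.sum_congr rfl fun i _ => ?_
    refine Finset.sum_congr rfl fun m _ => ?_
    rw [Dmap_tmul]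
  -- Step 8: the right-hand side equals the same sum
  have h8 : AA k H X L a δL s (BB k H X L δL t (coactP k H X L δX δL (x ⊗ₜ[k] l))) =
      ∑ n ∈ SS, ∑ c ∈ SV n.2, ∑ i ∈ SX, ∑ m ∈ SZ,
        (n.1 * (i.1 * m.1)) ⊗ₜ[k] (a (c.1 ⊗ₜ[k] i.2) ⊗ₜ[k] (c.2 * m.2)) := by
    have hz2 : (∑ g ∈ SL2, ∑ h2 ∈ ST, (g.1 * h2.1) ⊗ₜ[k] (g.2 * h2.2)) =
        ∑ m ∈ SZ, m.1 ⊗ₜ[k] m.2 := by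
      rw [← hSZ, hSL2, hST, Finset.sum_mul_sum]
      exact Finset.sum_congr rfl fun g _ => Finset.sum_congr rfl fun h2 _ =>
        (Algebra.TensorProduct.tmul_mul_tmul _ _ _ _).symm
    have hev : AA k H X L a δL s (BB k H X L δL t (coactP k H X L δX δL (x ⊗ₜ[k] l))) =
        ∑ i ∈ SX, ∑ g ∈ SL2, ∑ h2 ∈ ST, ∑ n ∈ SS, ∑ c ∈ SV n.2,
          (n.1 * ((i.1 * g.1) * h2.1)) ⊗ₜ[k]
            (a (c.1 ⊗ₜ[k] i.2) ⊗ₜ[k] (c.2 * (g.2 * h2.2))) := by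
      rw [coact_eval k H X L δX δL x l SX SL2 hSX hSL2]
      simp only [map_sum]
      refine Finset.sum_congr rfl fun i _ => ?_
      refine Finset.sum_congr rfl fun g _ => ?_
      rw [BB_tmul k H X L δL t ST hST, map_sum]
      refine Finset.sum_congr rfl fun h2 _ => ?_
      rw [ract_tmul, AA_tmul k H X L a δL s SS hSS]
      refine Finset.sum_congr rfl fun n _ => ?_
      rw [lact_tmul, hSV n.2, map_sum, TensorProduct.tmul_sum]
      refine Finset.sum_congr rfl fun c _ => ?_
      simp only [TensorProduct.map_tmul, LinearMap.comp_apply, TensorProduct.mk_apply,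
        LinearMap.flip_apply, LinearMap.mulRight_apply]
    rw [hev, sum_perm5]
    refine Finset.sum_congr rfl fun n _ => ?_
    refine Finset.sum_congr rfl fun c _ => ?_
    refine Finset.sum_congr rfl fun i _ => ?_
    have key := congrArg (Phimap k H X L (n.1 * i.1) (a (c.1 ⊗ₜ[k] i.2)) c.2) hz2
    simp only [map_sum, Phimap_tmul] at key
    calc ∑ g ∈ SL2, ∑ h2 ∈ ST,
          (n.1 * ((i.1 * g.1) * h2.1)) ⊗ₜ[k]
            (a (c.1 ⊗ₜ[k] i.2) ⊗ₜ[k] (c.2 * (g.2 * h2.2)))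
        = ∑ g ∈ SL2, ∑ h2 ∈ ST,
          ((n.1 * i.1) * (g.1 * h2.1)) ⊗ₜ[k]
            (a (c.1 ⊗ₜ[k] i.2) ⊗ₜ[k] (c.2 * (g.2 * h2.2))) := by
          refine Finset.sum_congr rfl fun g _ => Finset.sum_congr rfl fun h2 _ => ?_
          rw [mul_assoc, mul_assoc]
      _ = ∑ m ∈ SZ, ((n.1 * i.1) * m.1) ⊗ₜ[k] (a (c.1 ⊗ₜ[k] i.2) ⊗ₜ[k] (c.2 * m.2)) := key
      _ = ∑ m ∈ SZ, (n.1 * (i.1 * m.1)) ⊗ₜ[k] (a (c.1 ⊗ₜ[k] i.2) ⊗ₜ[k] (c.2 * m.2)) := by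
          refine Finset.sum_congr rfl fun m _ => ?_
          rw [mul_assoc]
  rw [h1, h2, h3, h4, h5, h6, h7, h8]

/-- Let `H` be a finite-dimensional Hopf algebra over a field `k`, `L` a left
`H`-comodule algebra and `(X, a, δX)` a Yetter–Drinfeld `H`-module.  Then `X ⊗ L`,
with the actions `s ≻ (x ⊗ l) ≺ t = s₋₁ · x ⊗ s₀ l t` and the coaction
`ρ(x ⊗ l) = x₋₁ l₋₁ ⊗ x₀ ⊗ l₀` coming from the α-induction functor `Ψ`, is a
well-defined object of the category `ᴴ_L𝔐_L` of `L`-bimodules in `H`-comodules. -/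
theorem alphaInduction_is_relative_Hopf_bimodule [Module.Finite k H]
    (hX : IsYetterDrinfeld k H X a δX) (hL : IsComoduleAlgebra k H L δL) :
    -- `≻` is a left `L`-action
    (lactL k H X L a δL 1 = LinearMap.id) ∧
    (∀ s t : L, lactL k H X L a δL (s * t) =
      (lactL k H X L a δL s) ∘ₗ (lactL k H X L a δL t)) ∧
    -- `≺` is a right `L`-action
    (ractL k X L 1 = LinearMap.id) ∧
    (∀ s t : L, ractL k X L (s * t) = (ractL k X L t) ∘ₗ (ractL k X L s)) ∧
    -- the two actions commute, so `X ⊗ L` is an `L`-bimodule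
    (∀ s t : L, (lactL k H X L a δL s) ∘ₗ (ractL k X L t) =
      (ractL k X L t) ∘ₗ (lactL k H X L a δL s)) ∧
    -- the coaction is a comodule structure
    (IsComodule k H (X ⊗[k] L) (coactP k H X L δX δL)) ∧
    -- compatibility `δ(s ≻ p ≺ t) = s₋₁ p₋₁ t₋₁ ⊗ (s₀ ≻ p₀ ≺ t₀)`
    (∀ s t : L,
      (coactP k H X L δX δL) ∘ₗ (lactL k H X L a δL s) ∘ₗ (ractL k X L t) =
        (AA k H X L a δL s) ∘ₗ (BB k H X L δL t) ∘ₗ (coactP k H X L δX δL)) := by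
  obtain ⟨⟨hact1, hact2⟩, ⟨hcoX, hcuX⟩, hyd⟩ := hX
  obtain ⟨⟨hcoL, hcuL⟩, h1L, hmulL⟩ := hL
  exact ⟨part1 k H X L a δL hact1 h1L,
    fun s t => part2 k H X L a δL hact2 hmulL s t,
    part3 k X L,
    fun s t => part4 k X L s t,
    fun s t => part5 k H X L a δL s t,
    ⟨part6co k H X L δX δL hcoX hcoL, part6cu k H X L δX δL hcuX hcuL⟩,
    fun s t => part7 k H X L a δX δL hyd hcoL hcuL hmulL s t⟩

end
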